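/- For any integer k ≥ 1 and any nonnegative integer n, we have n·↑^{k+1} < ↑^k, where n·G is the disjunctive sum of n copies of G. -/

import Mathlib

namespace SetTheory

universe u

/-- Pre-games (removed from Mathlib; old definition restored). -/
inductive PGame : Type (u + 1)
  | mk : ∀ α β : Type u, (α → PGame) → (β → PGame) → PGame

namespace PGame

def LeftMoves : PGame → Type u
  | mk l _ _ _ => l

def RightMoves : PGame → Type u
  | mk _ r _ _ => r

def moveLeft : ∀ g : PGame, LeftMoves g → PGame
  | mk _l _ L _ => L

def moveRight : ∀ g : PGame, RightMoves g → PGame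
  | mk _ _r _ R => R

instance : Zero PGame := ⟨⟨PEmpty, PEmpty, PEmpty.elim, PEmpty.elim⟩⟩

def star : PGame.{u} := ⟨PUnit, PUnit, fun _ => 0, fun _ => 0⟩

def neg : PGame → PGame
  | ⟨l, r, L, R⟩ => ⟨r, l, fun i => neg (R i), fun i => neg (L i)⟩

instance : Neg PGame := ⟨neg⟩

def addAux (xl xr : Type u) (fL : xl → PGame.{u} → PGame.{u}) (fR : xr → PGame.{u} → PGame.{u})
    (xR : xr → PGame.{u}) (xL : xl → PGame.{u}) : PGame.{u} → PGame.{u}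
  | mk yl yr yL yR =>
    mk (xl ⊕ yl) (xr ⊕ yr)
      (Sum.elim (fun i => fL i (mk yl yr yL yR)) (fun j => addAux xl xr fL fR xR xL (yL j)))
      (Sum.elim (fun i => fR i (mk yl yr yL yR)) (fun j => addAux xl xr fL fR xR xL (yR j)))

def add : PGame.{u} → PGame.{u} → PGame.{u}
  | mk xl xr xL xR => addAux xl xr (fun i => add (xL i)) (fun i => add (xR i)) xR xL

instance : Add PGame.{u} := ⟨add⟩

instance : Sub PGame := ⟨fun x y => x + -y⟩

noncomputable def leLF (x : PGame.{u}) : PGame.{u} → Prop × Prop :=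
  PGame.rec (motive := fun _ => PGame.{u} → Prop × Prop)
    (fun _ _ _ _ IHxl IHxr y =>
      PGame.rec (motive := fun _ => Prop × Prop)
        (fun yl yr yL yR IHyl IHyr =>
          ((∀ i, (IHxl i (mk yl yr yL yR)).2) ∧ ∀ j, (IHyr j).2,
           (∃ i, (IHyl i).1) ∨ ∃ j, (IHxr j (mk yl yr yL yR)).1)) y) x

noncomputable instance : LE PGame := ⟨fun x y => (leLF x y).1⟩

def LF (x y : PGame) : Prop := (leLF x y).2

noncomputable instance : LT PGame := ⟨fun x y => x ≤ y ∧ LF x y⟩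

theorem le_def {x y : PGame} :
    x ≤ y ↔ (∀ i, LF (x.moveLeft i) y) ∧ ∀ j, LF x (y.moveRight j) := by
  cases x; cases y; exact Iff.rfl

theorem lf_def {x y : PGame} :
    LF x y ↔ (∃ i, x ≤ y.moveLeft i) ∨ ∃ j, x.moveRight j ≤ y := by
  cases x; cases y; exact Iff.rfl

theorem iff_not_of_iff_not {a b : Prop} (h : b ↔ ¬ a) : a ↔ ¬ b :=
  ⟨fun ha hb => h.1 hb ha, fun hnb => Classical.byContradiction fun hna => hnb (h.2 hna)⟩

theorem lf_iff_not_le (x y : PGame) : LF x y ↔ ¬ y ≤ x := by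
  suffices h : ∀ x y : PGame, (LF x y ↔ ¬ y ≤ x) ∧ (LF y x ↔ ¬ x ≤ y) from (h x y).1
  intro x
  induction x with
  | mk xl xr xL xR IHxl IHxr =>
  intro y
  induction y with
  | mk yl yr yL yR IHyl IHyr =>
  constructor
  · rw [lf_def, le_def, not_and_or, not_forall, not_forall]
    exact or_congr (exists_congr fun i => iff_not_of_iff_not (IHyl i).2)
      (exists_congr fun j => iff_not_of_iff_not (IHxr j _).2)
  · rw [lf_def, le_def, not_and_or, not_forall, not_forall]
    exact or_congr (exists_congr fun i => iff_not_of_iff_not (IHxl i _).1)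
      (exists_congr fun j => iff_not_of_iff_not (IHyr j).1)

theorem le_def' {x y : PGame} :
    x ≤ y ↔ (∀ i, ¬ y ≤ x.moveLeft i) ∧ ∀ j, ¬ y.moveRight j ≤ x := by
  rw [le_def]; simp only [lf_iff_not_le]

theorem le_refl' (x : PGame) : x ≤ x := by
  induction x with
  | mk xl xr xL xR IHxl IHxr =>
  rw [le_def]
  exact ⟨fun i => lf_def.2 (Or.inl ⟨i, IHxl i⟩), fun j => lf_def.2 (Or.inr ⟨j, IHxr j⟩)⟩

theorem le_trans_aux : ∀ x y z : PGame,
    (x ≤ y → y ≤ z → x ≤ z) ∧ (y ≤ z → z ≤ x → y ≤ x) ∧ (z ≤ x → x ≤ y → z ≤ y) := by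
  intro x
  induction x with
  | mk xl xr xL xR IHxl IHxr =>
  intro y
  induction y with
  | mk yl yr yL yR IHyl IHyr =>
  intro z
  induction z with
  | mk zl zr zL zR IHzl IHzr =>
  refine ⟨fun hxy hyz => ?_, fun hyz hzx => ?_, fun hzx hxy => ?_⟩
  · have hxy' := le_def'.1 hxy; have hyz' := le_def'.1 hyz; rw [le_def']
    exact ⟨fun i h => hxy'.1 i ((IHxl i _ _).2.1 hyz h), fun k h => hyz'.2 k ((IHzr k).2.2 h hxy)⟩
  · have hzx' := le_def'.1 hzx; have hyz' := le_def'.1 hyz; rw [le_def']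
    exact ⟨fun i h => hyz'.1 i ((IHyl i _).2.2 hzx h), fun j h => hzx'.2 j ((IHxr j _ _).1 h hyz)⟩
  · have hzx' := le_def'.1 hzx; have hxy' := le_def'.1 hxy; rw [le_def']
    exact ⟨fun i h => hzx'.1 i ((IHzl i).1 hxy h), fun j h => hxy'.2 j ((IHyr j _).2.1 h hzx)⟩

theorem le_trans' {x y z : PGame} (h₁ : x ≤ y) (h₂ : y ≤ z) : x ≤ z :=
  (le_trans_aux x y z).1 h₁ h₂

def Equiv (x y : PGame) : Prop := x ≤ y ∧ y ≤ x

instance setoid : Setoid PGame :=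
  ⟨Equiv, ⟨fun x => ⟨le_refl' x, le_refl' x⟩, fun h => ⟨h.2, h.1⟩,
    fun h₁ h₂ => ⟨le_trans' h₁.1 h₂.1, le_trans' h₂.2 h₁.2⟩⟩⟩

theorem add_le_add_right_aux : ∀ x y z : PGame,
    (x ≤ y → x + z ≤ y + z) ∧ (LF x y → LF (x + z) (y + z)) := by
  intro x
  induction x with
  | mk xl xr xL xR IHxl IHxr =>
  intro y
  induction y with
  | mk yl yr yL yR IHyl IHyr =>
  intro z
  induction z with
  | mk zl zr zL zR IHzl IHzr =>
  constructor
  · intro hxy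
    have hxy' := le_def.1 hxy
    rw [le_def]
    refine ⟨?_, ?_⟩
    · rintro (i | k)
      · exact (IHxl i _ _).2 (hxy'.1 i)
      · exact lf_def.2 (Or.inl ⟨Sum.inr k, (IHzl k).1 hxy⟩)
    · rintro (j | k)
      · exact (IHyr j _).2 (hxy'.2 j)
      · exact lf_def.2 (Or.inr ⟨Sum.inr k, (IHzr k).1 hxy⟩)
  · intro hxy
    rcases lf_def.1 hxy with ⟨i, hi⟩ | ⟨j, hj⟩
    · exact lf_def.2 (Or.inl ⟨Sum.inl i, (IHyl i _).1 hi⟩)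
    · exact lf_def.2 (Or.inr ⟨Sum.inl j, (IHxr j _ _).1 hj⟩)

theorem add_comm_le : ∀ x y : PGame, x + y ≤ y + x := by
  intro x
  induction x with
  | mk xl xr xL xR IHxl IHxr =>
  intro y
  induction y with
  | mk yl yr yL yR IHyl IHyr =>
  rw [le_def]
  refine ⟨?_, ?_⟩
  · rintro (i | k)
    · exact lf_def.2 (Or.inl ⟨Sum.inr i, IHxl i _⟩)
    · exact lf_def.2 (Or.inl ⟨Sum.inl k, IHyl k⟩)
  · rintro (k | j)
    · exact lf_def.2 (Or.inr ⟨Sum.inr k, IHyr k⟩)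
    · exact lf_def.2 (Or.inr ⟨Sum.inl j, IHxr j _⟩)

theorem add_le_add' {x x' y y' : PGame} (hx : x ≤ x') (hy : y ≤ y') : x + y ≤ x' + y' :=
  le_trans' ((add_le_add_right_aux _ _ _).1 hx)
    (le_trans' (add_comm_le _ _) (le_trans' ((add_le_add_right_aux _ _ _).1 hy) (add_comm_le _ _)))

theorem lt_congr' {x₁ y₁ x₂ y₂ : PGame} (hx : x₁ ≈ x₂) (hy : y₁ ≈ y₂) : (x₁ < y₁) = (x₂ < y₂) := by
  apply propext
  change (x₁ ≤ y₁ ∧ LF x₁ y₁) ↔ (x₂ ≤ y₂ ∧ LF x₂ y₂)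
  rw [lf_iff_not_le, lf_iff_not_le]
  exact ⟨fun h => ⟨le_trans' hx.2 (le_trans' h.1 hy.1), fun h' => h.2 (le_trans' hy.1 (le_trans' h' hx.2))⟩,
    fun h => ⟨le_trans' hx.1 (le_trans' h.1 hy.2), fun h' => h.2 (le_trans' hy.2 (le_trans' h' hx.1))⟩⟩

end PGame

/-- Games: pre-games up to equivalence (removed from Mathlib; old definition restored). -/
abbrev Game := Quotient PGame.setoid

namespace Game

instance : Zero Game := ⟨⟦0⟧⟩

instance : Add Game :=
  ⟨Quotient.map₂ (· + ·) (fun _ _ hx _ _ hy => ⟨PGame.add_le_add' hx.1 hy.1, PGame.add_le_add' hx.2 hy.2⟩)⟩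

instance : SMul ℕ Game := ⟨nsmulRec⟩

instance : LT Game := ⟨Quotient.lift₂ (· < ·) (fun _ _ _ _ hx hy => PGame.lt_congr' hx hy)⟩

end Game

end SetTheory


open SetTheory

open scoped PGame

namespace SeqCompound

open Classical in
/-- The sequential compound `G → H` of two pregames. -/
noncomputable def seqc : PGame → PGame → PGame
  | PGame.mk α β L R, H =>
    if Nonempty α then
      if Nonempty β then
        PGame.mk α β (fun a => seqc (L a) H) (fun b => seqc (R b) H)
      else
        PGame.mk α H.RightMoves (fun a => seqc (L a) H) H.moveRight
    else
      if Nonempty β then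
        PGame.mk H.LeftMoves β H.moveLeft (fun b => seqc (R b) H)
      else H

/-- A pregame is dicotic (all-small) if in every subposition,
Left has an option iff Right has an option. -/
def Dicotic : PGame → Prop
  | PGame.mk α β L R =>
    (Nonempty α ↔ Nonempty β) ∧ (∀ a, Dicotic (L a)) ∧ (∀ b, Dicotic (R b))

/-- The canonical nonnegative integer game `{n-1 | }`. -/
def intGame : ℕ → PGame
  | 0 => 0
  | n + 1 => PGame.mk PUnit PEmpty (fun _ => intGame n) PEmpty.elim

/-- `upSum k` is the disjunctive sum `↑¹ + ↑² + ⋯ + ↑ᵏ`. -/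
def upSum : ℕ → PGame
  | 0 => 0
  | k + 1 => upSum k +
      PGame.mk PUnit PUnit (fun _ => 0) (fun _ => PGame.star - upSum k)

/-- `upPow k` is the game `↑^(k+1) = {0 | ∗ - (↑¹ + ⋯ + ↑ᵏ)}`. -/
def upPow (k : ℕ) : PGame :=
  PGame.mk PUnit PUnit (fun _ => 0) (fun _ => PGame.star - upSum k)

/-- Sequential compound of a list of games. -/
noncomputable def seqList : List PGame → PGame
  | [] => 0
  | G :: l => seqc G (seqList l)

end SeqCompound


namespace SetTheory
namespace PGame

infix:50 " ⧏ " => LF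

theorem le_iff_forall_lf {x y : PGame} :
    x ≤ y ↔ (∀ i, x.moveLeft i ⧏ y) ∧ ∀ j, x ⧏ y.moveRight j := le_def

theorem lf_of_le_moveLeft {x y : PGame} {i : y.LeftMoves} (h : x ≤ y.moveLeft i) : x ⧏ y :=
  lf_def.2 (Or.inl ⟨i, h⟩)

theorem lf_of_moveRight_le {x y : PGame} {j : x.RightMoves} (h : x.moveRight j ≤ y) : x ⧏ y :=
  lf_def.2 (Or.inr ⟨j, h⟩)

theorem lf_of_lt {x y : PGame} (h : x < y) : x ⧏ y := h.2

theorem lt_of_le_of_lf {x y : PGame} (h₁ : x ≤ y) (h₂ : x ⧏ y) : x < y := ⟨h₁, h₂⟩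

instance isEmpty_zero_leftMoves : IsEmpty (LeftMoves 0) := inferInstanceAs (IsEmpty PEmpty)

instance isEmpty_zero_rightMoves : IsEmpty (RightMoves 0) := inferInstanceAs (IsEmpty PEmpty)

def toLeftMovesAdd {x y : PGame} : x.LeftMoves ⊕ y.LeftMoves → (x + y).LeftMoves := by
  cases x; cases y; exact id

def toRightMovesAdd {x y : PGame} : x.RightMoves ⊕ y.RightMoves → (x + y).RightMoves := by
  cases x; cases y; exact id

theorem add_moveLeft_inl {x y : PGame} (i : x.LeftMoves) :
    (x + y).moveLeft (toLeftMovesAdd (Sum.inl i)) = x.moveLeft i + y := by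
  cases x; cases y; rfl

theorem add_moveLeft_inr {x y : PGame} (i : y.LeftMoves) :
    (x + y).moveLeft (toLeftMovesAdd (Sum.inr i)) = x + y.moveLeft i := by
  cases x; cases y; rfl

theorem add_moveRight_inl {x y : PGame} (i : x.RightMoves) :
    (x + y).moveRight (toRightMovesAdd (Sum.inl i)) = x.moveRight i + y := by
  cases x; cases y; rfl

theorem add_moveRight_inr {x y : PGame} (i : y.RightMoves) :
    (x + y).moveRight (toRightMovesAdd (Sum.inr i)) = x + y.moveRight i := by
  cases x; cases y; rfl

theorem leftMoves_add_cases {x y : PGame} (k : (x + y).LeftMoves) {P : (x + y).LeftMoves → Prop}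
    (hl : ∀ i, P (toLeftMovesAdd (Sum.inl i))) (hr : ∀ i, P (toLeftMovesAdd (Sum.inr i))) :
    P k := by
  cases x; cases y
  rcases k with i | i
  · exact hl i
  · exact hr i

theorem rightMoves_add_cases {x y : PGame} (k : (x + y).RightMoves) {P : (x + y).RightMoves → Prop}
    (hl : ∀ i, P (toRightMovesAdd (Sum.inl i))) (hr : ∀ i, P (toRightMovesAdd (Sum.inr i))) :
    P k := by
  cases x; cases y
  rcases k with i | i
  · exact hl i
  · exact hr i

def toLeftMovesNeg {x : PGame} : x.RightMoves → (-x).LeftMoves := by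
  cases x; exact id

theorem moveLeft_neg {x : PGame} (i : x.RightMoves) :
    (-x).moveLeft (toLeftMovesNeg i) = -x.moveRight i := by
  cases x; rfl

theorem neg_le_lf_aux : ∀ x y : PGame, (-y ≤ -x ↔ x ≤ y) ∧ (LF (-y) (-x) ↔ LF x y) := by
  intro x
  induction x with
  | mk xl xr xL xR IHxl IHxr =>
  intro y
  induction y with
  | mk yl yr yL yR IHyl IHyr =>
  constructor
  · exact ⟨fun h => le_def.2 ⟨fun i => (IHxl i (mk yl yr yL yR)).2.1 ((le_def.1 h).2 i),
      fun j => (IHyr j).2.1 ((le_def.1 h).1 j)⟩,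
      fun h => le_def.2 ⟨fun j => (IHyr j).2.2 ((le_def.1 h).2 j),
      fun i => (IHxl i (mk yl yr yL yR)).2.2 ((le_def.1 h).1 i)⟩⟩
  · constructor
    · intro h
      rcases lf_def.1 h with ⟨i, hi⟩ | ⟨j, hj⟩
      · exact lf_def.2 (Or.inr ⟨i, (IHxr i (mk yl yr yL yR)).1.1 hi⟩)
      · exact lf_def.2 (Or.inl ⟨j, (IHyl j).1.1 hj⟩)
    · intro h
      rcases lf_def.1 h with ⟨i, hi⟩ | ⟨j, hj⟩
      · exact lf_def.2 (Or.inr ⟨i, (IHyl i).1.2 hi⟩)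
      · exact lf_def.2 (Or.inl ⟨j, (IHxr j (mk yl yr yL yR)).1.2 hj⟩)

theorem pneg_le_pneg_iff {x y : PGame} : -y ≤ -x ↔ x ≤ y := (neg_le_lf_aux x y).1

theorem zero_add_le_aux : ∀ x : PGame, 0 + x ≤ x ∧ x ≤ 0 + x := by
  intro x
  induction x with
  | mk xl xr xL xR IHl IHr =>
  constructor
  · refine le_def.2 ⟨?_, ?_⟩
    · rintro (i | i)
      · exact PEmpty.elim i
      · exact lf_of_le_moveLeft (i := i) (IHl i).1
    · intro j
      exact lf_of_moveRight_le (j := Sum.inr j) (IHr j).1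
  · refine le_def.2 ⟨?_, ?_⟩
    · intro i
      exact lf_of_le_moveLeft (i := Sum.inr i) (IHl i).2
    · rintro (j | j)
      · exact PEmpty.elim j
      · exact lf_of_moveRight_le (j := j) (IHr j).2

theorem add_neg_aux : ∀ x : PGame, x + -x ≤ 0 ∧ 0 ≤ x + -x := by
  intro x
  induction x with
  | mk xl xr xL xR IHl IHr =>
  constructor
  · refine le_def.2 ⟨?_, fun j => PEmpty.elim j⟩
    rintro (i | j)
    · show LF (xL i + -(mk xl xr xL xR)) 0
      refine lf_of_moveRight_le (j := toRightMovesAdd (Sum.inr i)) ?_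
      erw [add_moveRight_inr]
      exact (IHl i).1
    · show LF (mk xl xr xL xR + -(xR j)) 0
      refine lf_of_moveRight_le (j := toRightMovesAdd (Sum.inl j)) ?_
      erw [add_moveRight_inl]
      exact (IHr j).1
  · refine le_def.2 ⟨fun i => PEmpty.elim i, ?_⟩
    rintro (j | i)
    · show LF 0 (xR j + -(mk xl xr xL xR))
      refine lf_of_le_moveLeft (i := toLeftMovesAdd (Sum.inr j)) ?_
      erw [add_moveLeft_inr]
      exact (IHr j).2
    · show LF 0 (mk xl xr xL xR + -(xL i))
      refine lf_of_le_moveLeft (i := toLeftMovesAdd (Sum.inl i)) ?_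
      erw [add_moveLeft_inl]
      exact (IHl i).2

theorem add_assoc_le : ∀ x y z : PGame, (x + y) + z ≤ x + (y + z) := by
  intro x
  induction x with
  | mk xl xr xL xR IHxl IHxr =>
  intro y
  induction y with
  | mk yl yr yL yR IHyl IHyr =>
  intro z
  induction z with
  | mk zl zr zL zR IHzl IHzr =>
  refine le_def.2 ⟨?_, ?_⟩
  · rintro ((i | j) | k)
    · exact lf_of_le_moveLeft (i := Sum.inl i) (IHxl i (mk yl yr yL yR) (mk zl zr zL zR))
    · exact lf_of_le_moveLeft (i := Sum.inr (Sum.inl j)) (IHyl j (mk zl zr zL zR))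
    · exact lf_of_le_moveLeft (i := Sum.inr (Sum.inr k)) (IHzl k)
  · rintro (i | (j | k))
    · exact lf_of_moveRight_le (j := Sum.inl (Sum.inl i)) (IHxr i (mk yl yr yL yR) (mk zl zr zL zR))
    · exact lf_of_moveRight_le (j := Sum.inl (Sum.inr j)) (IHyr j (mk zl zr zL zR))
    · exact lf_of_moveRight_le (j := Sum.inr k) (IHzr k)

theorem add_assoc_equiv (x y z : PGame) : (x + y) + z ≈ x + (y + z) :=
  ⟨add_assoc_le x y z,
    le_trans' (add_comm_le x (y + z)) (le_trans' (add_assoc_le y z x)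
      (le_trans' (add_comm_le y (z + x)) (le_trans' (add_assoc_le z x y) (add_comm_le z (x + y)))))⟩

end PGame

namespace Game

def negFn : Game → Game :=
  Quotient.map (fun x => -x) (fun _ _ h => ⟨PGame.pneg_le_pneg_iff.2 h.2, PGame.pneg_le_pneg_iff.2 h.1⟩)

instance : Neg Game := ⟨negFn⟩

def leFn : Game → Game → Prop :=
  Quotient.lift₂ (· ≤ ·) (fun _ _ _ _ hx hy => propext
    ⟨fun h => PGame.le_trans' hx.2 (PGame.le_trans' h hy.1),
     fun h => PGame.le_trans' hx.1 (PGame.le_trans' h hy.2)⟩)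

end Game

namespace Game

abbrev gameAddCommGroup : AddCommGroup Game where
  add := (· + ·)
  zero := 0
  neg := Neg.neg
  sub := fun a b => a + -b
  nsmul := nsmulRec
  zsmul := zsmulRec
  add_assoc := by
    rintro ⟨x⟩ ⟨y⟩ ⟨z⟩
    exact Quotient.sound (PGame.add_assoc_equiv x y z)
  zero_add := by
    rintro ⟨x⟩
    exact Quotient.sound (PGame.zero_add_le_aux x)
  add_zero := by
    rintro ⟨x⟩
    exact Quotient.sound ⟨PGame.le_trans' (PGame.add_comm_le x 0) (PGame.zero_add_le_aux x).1,
      PGame.le_trans' (PGame.zero_add_le_aux x).2 (PGame.add_comm_le 0 x)⟩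
  neg_add_cancel := by
    rintro ⟨x⟩
    exact Quotient.sound ⟨PGame.le_trans' (PGame.add_comm_le (-x) x) (PGame.add_neg_aux x).1,
      PGame.le_trans' (PGame.add_neg_aux x).2 (PGame.add_comm_le x (-x))⟩
  add_comm := by
    rintro ⟨x⟩ ⟨y⟩
    exact Quotient.sound ⟨PGame.add_comm_le x y, PGame.add_comm_le y x⟩
  sub_eq_add_neg := fun _ _ => rfl

abbrev gamePartialOrder : PartialOrder Game where
  toLT := inferInstance
  le := leFn
  le_refl := by
    rintro ⟨x⟩
    exact PGame.le_refl' x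
  le_trans := by
    rintro ⟨x⟩ ⟨y⟩ ⟨z⟩ h1 h2
    exact PGame.le_trans' h1 h2
  lt_iff_le_not_ge := by
    rintro ⟨x⟩ ⟨y⟩
    exact ⟨fun h => ⟨h.1, (PGame.lf_iff_not_le x y).1 h.2⟩,
      fun h => ⟨h.1, (PGame.lf_iff_not_le x y).2 h.2⟩⟩
  le_antisymm := by
    rintro ⟨x⟩ ⟨y⟩ h1 h2
    exact Quotient.sound ⟨h1, h2⟩

abbrev gamePreorder : Preorder Game := gamePartialOrder.toPreorder

abbrev gameLE : LE Game := ⟨leFn⟩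

section
attribute [local instance] gameAddCommGroup gamePartialOrder gamePreorder gameLE

theorem gameIsOrderedAddMonoid : IsOrderedAddMonoid Game where
  add_le_add_left := by
    rintro ⟨a⟩ ⟨b⟩ h ⟨c⟩
    exact PGame.add_le_add' (show a ≤ b from h) (PGame.le_refl' c)

end

end Game

namespace PGame

@[simp] theorem quot_add (x y : PGame) : (⟦x + y⟧ : Game) = ⟦x⟧ + ⟦y⟧ := rfl

theorem lt_iff_game_lt {x y : PGame} : x < y ↔ (⟦x⟧ : Game) < ⟦y⟧ := Iff.rfl

section
attribute [local instance] Game.gameAddCommGroup Game.gamePartialOrder Game.gamePreorder Game.gameLE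

@[simp] theorem quot_neg (x : PGame) : (⟦-x⟧ : Game) = -⟦x⟧ := rfl

@[simp] theorem quot_sub (x y : PGame) : (⟦x - y⟧ : Game) = ⟦x⟧ - ⟦y⟧ := rfl

@[simp] theorem quot_zero : (⟦0⟧ : Game) = 0 := rfl

theorem le_iff_game_le {x y : PGame} : x ≤ y ↔ (⟦x⟧ : Game) ≤ ⟦y⟧ := Iff.rfl

end

end PGame

end SetTheory

namespace UpAux

attribute [local instance] Game.gameAddCommGroup Game.gamePartialOrder Game.gamePreorder Game.gameLE Game.gameIsOrderedAddMonoid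

open SeqCompound

section Generic
variable {α : Type*} [AddCommGroup α] [PartialOrder α] [IsOrderedAddMonoid α]

lemma le_self_add_add {b c : α} (hb : 0 ≤ b) (hc : 0 ≤ c) : b ≤ b + b + c := by
  rw [add_assoc]; exact le_add_of_nonneg_right (add_nonneg hb hc)

lemma lt_aux1 {a b z : α} (s : α) (h : a < b) (hb : 0 ≤ b) (hz : 0 ≤ z) :
    a + s < b + b + (z + s) := by
  have e : b + b + (z + s) = (b + s) + (b + z) := by abel
  rw [e]
  exact lt_of_lt_of_le (add_lt_add_left h s) (le_add_of_nonneg_right (add_nonneg hb hz))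

lemma lt_aux2 {a b : α} (s c : α) (h : a < b) : a + s < s - c + b + c := by
  have e : s - c + b + c = b + s := by abel
  rw [e]; exact add_lt_add_left h s

lemma lt_aux3 {a b : α} (s c : α) (h : a < b) : a + s < b + (s - c) + c := by
  have e : b + (s - c) + c = b + s := by abel
  rw [e]; exact add_lt_add_left h s

lemma le_aux4 {a b s c : α} (h : a ≤ b) : a + (s - (c + b)) ≤ s - c := by
  have e : a + (s - (c + b)) = s - c + (a - b) := by abel
  rw [e]
  have h2 := add_le_add_left (sub_nonpos.2 h) (s - c)
  simpa using h2

lemma le_aux5 {a s b c : α} (h : a + s ≤ b + b + c) : a + (s - (c + b)) ≤ b := by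
  have e : a + (s - (c + b)) = (a + s) - (b + c) := by abel
  rw [e, sub_le_iff_le_add]
  have e2 : b + (b + c) = b + b + c := by abel
  rw [e2]; exact h

end Generic

/-- `n` disjoint copies of `G`. -/
def nCopies : ℕ → PGame → PGame
  | 0, _ => 0
  | n + 1, G => nCopies n G + G

lemma quot_nCopies_succ (n : ℕ) (G : PGame) :
    (⟦nCopies (n + 1) G⟧ : Game) = ⟦nCopies n G⟧ + ⟦G⟧ := rfl

lemma upSum_succ (k : ℕ) : upSum (k + 1) = upSum k + upPow k := rfl

lemma quot_upSum_succ (k : ℕ) :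
    (⟦upSum (k + 1)⟧ : Game) = ⟦upSum k⟧ + ⟦upPow k⟧ := rfl

lemma zero_le_upPow (k : ℕ) : (0 : PGame) ≤ upPow k := by
  rw [PGame.le_iff_forall_lf]
  refine ⟨fun i => isEmptyElim i, fun j => ?_⟩
  show (0 : PGame) ⧏ PGame.star - upSum k
  cases k with
  | zero =>
    show (0 : PGame) ⧏ PGame.star + -upSum 0
    refine PGame.lf_of_le_moveLeft
      (i := PGame.toLeftMovesAdd (Sum.inl PUnit.unit)) ?_
    erw [PGame.add_moveLeft_inl]
    show (0 : PGame) ≤ 0 + -upSum 0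
    rw [PGame.le_iff_game_le]
    show (0 : Game) ≤ ⟦(0 : PGame) + -upSum 0⟧
    simp [upSum]
  | succ t =>
    show (0 : PGame) ⧏ PGame.star + -(upSum t + upPow t)
    refine PGame.lf_of_le_moveLeft
      (i := PGame.toLeftMovesAdd (Sum.inr (PGame.toLeftMovesNeg
        (PGame.toRightMovesAdd (Sum.inr PUnit.unit))))) ?_
    erw [PGame.add_moveLeft_inr, PGame.moveLeft_neg, PGame.add_moveRight_inr]
    show (0 : PGame) ≤ PGame.star + -(upSum t + (PGame.star - upSum t))
    rw [PGame.le_iff_game_le]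
    show (0 : Game) ≤ ⟦PGame.star + -(upSum t + (PGame.star - upSum t))⟧
    simp only [PGame.quot_add, PGame.quot_neg, PGame.quot_sub]
    have h : (⟦PGame.star⟧ : Game) + -(⟦upSum t⟧ + (⟦PGame.star⟧ - ⟦upSum t⟧)) = 0 := by
      abel
    rw [h]

lemma zero_lf_upPow (k : ℕ) : (0 : PGame) ⧏ upPow k :=
  PGame.lf_of_le_moveLeft (i := PUnit.unit) (PGame.le_refl' _)

lemma upPow_pos (k : ℕ) : (0 : Game) < ⟦upPow k⟧ :=
  PGame.lt_iff_game_lt.1 (PGame.lt_of_le_of_lf (zero_le_upPow k) (zero_lf_upPow k))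

lemma upSum_nonneg (k : ℕ) : (0 : Game) ≤ ⟦upSum k⟧ := by
  induction k with
  | zero => exact le_rfl
  | succ t ih =>
    rw [quot_upSum_succ]
    exact add_nonneg ih (upPow_pos t).le

lemma upSum_moveRight (t : ℕ) (r : (upSum t).RightMoves) :
    ∃ Z : Game, 0 ≤ Z ∧ (⟦(upSum t).moveRight r⟧ : Game) = Z + ⟦PGame.star⟧ := by
  induction t with
  | zero => exact isEmptyElim (α := ((0 : PGame)).RightMoves) r
  | succ m ih =>
    refine PGame.rightMoves_add_cases (x := upSum m) (y := upPow m)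
      (P := fun r => ∃ Z : Game, 0 ≤ Z ∧
        (⟦(upSum m + upPow m).moveRight r⟧ : Game) = Z + ⟦PGame.star⟧) r ?_ ?_
    · intro j
      show ∃ Z : Game, 0 ≤ Z ∧
        (⟦(upSum m + upPow m).moveRight (PGame.toRightMovesAdd (Sum.inl j))⟧ : Game)
          = Z + ⟦PGame.star⟧
      rw [PGame.add_moveRight_inl]
      obtain ⟨Z, hZ, hq⟩ := ih j
      refine ⟨Z + ⟦upPow m⟧, add_nonneg hZ (upPow_pos m).le, ?_⟩
      rw [PGame.quot_add, hq]
      abel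
    · intro j
      show ∃ Z : Game, 0 ≤ Z ∧
        (⟦(upSum m + upPow m).moveRight (PGame.toRightMovesAdd (Sum.inr j))⟧ : Game)
          = Z + ⟦PGame.star⟧
      rw [PGame.add_moveRight_inr]
      refine ⟨0, le_rfl, ?_⟩
      show (⟦upSum m + (PGame.star - upSum m)⟧ : Game) = 0 + ⟦PGame.star⟧
      simp only [PGame.quot_add, PGame.quot_sub]
      abel

lemma nCopies_moveLeft (k n : ℕ) (i : (nCopies (n + 1) (upPow k)).LeftMoves) :
    (⟦(nCopies (n + 1) (upPow k)).moveLeft i⟧ : Game) = ⟦nCopies n (upPow k)⟧ := by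
  induction n with
  | zero =>
    refine PGame.leftMoves_add_cases (x := nCopies 0 (upPow k)) (y := upPow k)
      (P := fun i => (⟦(nCopies 0 (upPow k) + upPow k).moveLeft i⟧ : Game)
        = ⟦nCopies 0 (upPow k)⟧) i ?_ ?_
    · exact fun j => isEmptyElim (α := ((0 : PGame)).LeftMoves) j
    · intro j
      show (⟦(nCopies 0 (upPow k) + upPow k).moveLeft (PGame.toLeftMovesAdd (Sum.inr j))⟧ : Game)
        = ⟦nCopies 0 (upPow k)⟧
      rw [PGame.add_moveLeft_inr]
      show (⟦(0 : PGame) + 0⟧ : Game) = ⟦(0 : PGame)⟧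
      simp
  | succ m ih =>
    refine PGame.leftMoves_add_cases (x := nCopies (m + 1) (upPow k)) (y := upPow k)
      (P := fun i => (⟦(nCopies (m + 1) (upPow k) + upPow k).moveLeft i⟧ : Game)
        = ⟦nCopies (m + 1) (upPow k)⟧) i ?_ ?_
    · intro j
      show (⟦(nCopies (m + 1) (upPow k) + upPow k).moveLeft
          (PGame.toLeftMovesAdd (Sum.inl j))⟧ : Game) = ⟦nCopies (m + 1) (upPow k)⟧
      rw [PGame.add_moveLeft_inl, PGame.quot_add, ih j, ← quot_nCopies_succ]
    · intro j
      show (⟦(nCopies (m + 1) (upPow k) + upPow k).moveLeft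
          (PGame.toLeftMovesAdd (Sum.inr j))⟧ : Game) = ⟦nCopies (m + 1) (upPow k)⟧
      rw [PGame.add_moveLeft_inr]
      show (⟦nCopies (m + 1) (upPow k) + 0⟧ : Game) = ⟦nCopies (m + 1) (upPow k)⟧
      rw [PGame.quot_add, PGame.quot_zero, add_zero]

universe u

lemma lemC (k n : ℕ)
    (hB : (⟦nCopies n (upPow.{u} (k + 1))⟧ : Game) < ⟦upPow.{u} k⟧) :
    nCopies n (upPow.{u} (k + 1)) + PGame.star ≤ upPow.{u} k + upPow.{u} k + upSum.{u} k := by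
  have hU : (0 : Game) ≤ ⟦upPow (k + 1)⟧ := (upPow_pos (k + 1)).le
  have hUk : (0 : Game) ≤ ⟦upPow k⟧ := (upPow_pos k).le
  have hS : (0 : Game) ≤ ⟦upSum k⟧ := upSum_nonneg k
  have hYval : (⟦upPow k⟧ : Game) ≤ (⟦upPow k⟧ : Game) + (⟦upPow k⟧ : Game) + (⟦upSum k⟧ : Game) :=
    le_self_add_add hUk hS
  rw [PGame.le_iff_forall_lf]
  constructor
  · intro i
    refine PGame.leftMoves_add_cases
      (P := fun i => (nCopies n (upPow (k + 1)) + PGame.star).moveLeft i ⧏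
        upPow k + upPow k + upSum k) i ?_ ?_
    · intro j
      cases n with
      | zero => exact isEmptyElim (α := ((0 : PGame)).LeftMoves) j
      | succ m =>
        rw [PGame.add_moveLeft_inl]
        refine PGame.lf_of_moveRight_le
          (j := PGame.toRightMovesAdd (Sum.inr PUnit.unit)) ?_
        erw [PGame.add_moveRight_inr]
        show (nCopies (m + 1) (upPow (k + 1))).moveLeft j + 0 ≤ upPow k + upPow k + upSum k
        rw [PGame.le_iff_game_le]
        simp only [PGame.quot_add, PGame.quot_zero, add_zero]
        rw [nCopies_moveLeft]
        have h1 : (⟦nCopies m (upPow (k + 1))⟧ : Game)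
            ≤ ⟦nCopies (m + 1) (upPow (k + 1))⟧ := by
          rw [quot_nCopies_succ]; exact le_add_of_nonneg_right hU
        exact le_trans h1 (le_trans hB.le hYval)
    · intro j
      rw [PGame.add_moveLeft_inr]
      show nCopies n (upPow (k + 1)) + 0 ⧏ upPow k + upPow k + upSum k
      apply PGame.lf_of_lt
      rw [PGame.lt_iff_game_lt]
      simp only [PGame.quot_add, PGame.quot_zero, add_zero]
      exact lt_of_lt_of_le hB hYval
  · intro j
    refine PGame.rightMoves_add_cases
      (P := fun j => nCopies n (upPow (k + 1)) + PGame.star ⧏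
        (upPow k + upPow k + upSum k).moveRight j) j ?_ ?_
    · intro j1
      rw [PGame.add_moveRight_inl]
      refine PGame.rightMoves_add_cases
        (P := fun j1 => nCopies n (upPow (k + 1)) + PGame.star ⧏
          (upPow k + upPow k).moveRight j1 + upSum k) j1 ?_ ?_
      · intro j2
        rw [PGame.add_moveRight_inl]
        show nCopies n (upPow (k + 1)) + PGame.star ⧏
          (PGame.star - upSum k) + upPow k + upSum k
        apply PGame.lf_of_lt
        rw [PGame.lt_iff_game_lt]
        simp only [PGame.quot_add, PGame.quot_sub]
        exact lt_aux2 _ _ hB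
      · intro j2
        rw [PGame.add_moveRight_inr]
        show nCopies n (upPow (k + 1)) + PGame.star ⧏
          (upPow k + (PGame.star - upSum k)) + upSum k
        apply PGame.lf_of_lt
        rw [PGame.lt_iff_game_lt]
        simp only [PGame.quot_add, PGame.quot_sub]
        exact lt_aux3 _ _ hB
    · intro r
      rw [PGame.add_moveRight_inr]
      obtain ⟨Z, hZ, hq⟩ := upSum_moveRight k r
      apply PGame.lf_of_lt
      rw [PGame.lt_iff_game_lt]
      simp only [PGame.quot_add]
      rw [hq]
      exact lt_aux1 _ hB hUk hZ

lemma key (k n : ℕ) : nCopies n (upPow (k + 1)) < upPow k := by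
  induction n with
  | zero => exact PGame.lt_of_le_of_lf (zero_le_upPow k) (zero_lf_upPow k)
  | succ n IH =>
    have hB : (⟦nCopies n (upPow (k + 1))⟧ : Game) < ⟦upPow k⟧ :=
      PGame.lt_iff_game_lt.1 IH
    have hC := PGame.le_iff_game_le.1 (lemC k n hB)
    rw [PGame.quot_add, PGame.quot_add, PGame.quot_add] at hC
    apply PGame.lt_of_le_of_lf
    · rw [PGame.le_iff_forall_lf]
      constructor
      · intro i
        apply PGame.lf_of_lt
        rw [PGame.lt_iff_game_lt, nCopies_moveLeft]
        exact hB
      · intro j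
        show nCopies n (upPow (k + 1)) + upPow (k + 1) ⧏ (upPow k).moveRight j
        refine PGame.lf_of_moveRight_le
          (j := PGame.toRightMovesAdd (Sum.inr PUnit.unit)) ?_
        erw [PGame.add_moveRight_inr]
        show nCopies n (upPow (k + 1)) + (PGame.star - upSum (k + 1)) ≤
          PGame.star - upSum k
        rw [PGame.le_iff_game_le]
        simp only [PGame.quot_add, PGame.quot_sub, quot_upSum_succ]
        exact le_aux4 hB.le
    · show nCopies n (upPow (k + 1)) + upPow (k + 1) ⧏ upPow k
      refine PGame.lf_of_moveRight_le
        (j := PGame.toRightMovesAdd (Sum.inr PUnit.unit)) ?_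
      erw [PGame.add_moveRight_inr]
      show nCopies n (upPow (k + 1)) + (PGame.star - upSum (k + 1)) ≤ upPow k
      rw [PGame.le_iff_game_le]
      simp only [PGame.quot_add, PGame.quot_sub, quot_upSum_succ]
      exact le_aux5 hC

end UpAux

open SeqCompound in
/-- for `k ≥ 1` and `n ≥ 0`, `n·↑^(k+1) < ↑^k`
(here `upPow j` denotes `↑^(j+1)`). -/
theorem nsmul_upPow_lt (k n : ℕ) :
    (n • (⟦upPow (k + 1)⟧ : Game)) < (⟦upPow k⟧ : Game) := by
  have e : ∀ m : ℕ, (m • (⟦upPow (k + 1)⟧ : Game)) = ⟦UpAux.nCopies m (upPow (k + 1))⟧ := by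
    intro m
    induction m with
    | zero => rfl
    | succ t ih =>
      show (t • (⟦upPow (k + 1)⟧ : Game)) + ⟦upPow (k + 1)⟧ = _
      rw [ih, ← PGame.quot_add]
      rfl
  rw [e n]
  exact PGame.lt_iff_game_lt.1 (UpAux.key k n)
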